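/- Let Y carry the cylinder topology τ_cyl built from locally compact T1 sober spaces Y_k. If K̃ ⊆ Y is compact and saturated and w ∈ Y \ K̃, then there exist finitely many compact sets K_i ⊆ Y_{k_i} (i = 1,…,n) such that K̃ ⊆ ⋃_{i=1}^n Z(K_i) and w ∉ ⋃_{i=1}^n Z(K_i). -/

import Mathlib

open Set Topology TopologicalSpace Filter

universe u

variable {X : ℕ → Type u}

/-- Restriction (truncation) of a finite sequence of length `l` to length `k ≤ l`. -/
def restrictSeq {X : ℕ → Type u} {k l : ℕ} (h : k ≤ l) (f : (i : Fin l) → X i.1) :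
    (i : Fin k) → X i.1 :=
  fun i => f ⟨i.1, lt_of_lt_of_le i.2 h⟩

/-- The space `Y` of all finite and infinite compatible sequences for the family
of subspaces `Y k ⊆ X 0 × ⋯ × X (k-1)`. -/
def PathSpace (Y : (k : ℕ) → Set ((i : Fin k) → X i.1)) : Type u :=
  (Σ k : ℕ, {f : (i : Fin k) → X i.1 // f ∈ Y k}) ⊕
    {g : (n : ℕ) → X n // ∀ k : ℕ, (fun i : Fin k => g i.1) ∈ Y k}

/-- The cylinder set `Z(A)` over `A` at level `k`: all sequences of length `≥ k`
whose initial segment of length `k` lies in `A`. -/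
def Zcyl (Y : (k : ℕ) → Set ((i : Fin k) → X i.1)) (k : ℕ)
    (A : Set ((i : Fin k) → X i.1)) : Set (PathSpace Y) :=
  Sum.elim (fun q => ∃ h : k ≤ q.1, restrictSeq h q.2.1 ∈ A)
    (fun g => (fun i : Fin k => g.1 i.1) ∈ A)

/-- The cylinder topology `τ_cyl`, generated by the open cylinder sets. -/
def tauCyl [∀ n, TopologicalSpace (X n)] (Y : (k : ℕ) → Set ((i : Fin k) → X i.1)) :
    TopologicalSpace (PathSpace Y) :=
  TopologicalSpace.generateFrom
    {S | ∃ (k : ℕ) (U : Set ((i : Fin k) → X i.1)), IsOpen U ∧ S = Zcyl Y k U}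

/-- The length of a finite or infinite sequence. -/
def plen (Y : (k : ℕ) → Set ((i : Fin k) → X i.1)) (p : PathSpace Y) : ℕ∞ :=
  Sum.elim (fun q => (q.1 : ℕ∞)) (fun _ => (⊤ : ℕ∞)) p

/-- Truncation of an element of the path space to length `k ≤ plen p`. -/
def truncSeq (Y : (k : ℕ) → Set ((i : Fin k) → X i.1)) (k : ℕ) :
    (p : PathSpace Y) → ((k : ℕ∞) ≤ plen Y p) → ((i : Fin k) → X i.1)
  | Sum.inl q, h => restrictSeq (by simpa [plen] using h) q.2.1
  | Sum.inr g, _ => fun i => g.1 i.1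

/-- A set is saturated if it is the intersection of its open neighbourhoods. -/
def SaturatedSet {Z : Type*} [TopologicalSpace Z] (A : Set Z) : Prop :=
  A = ⋂₀ {U : Set Z | IsOpen U ∧ A ⊆ U}

/-- The patch topology of a topology `t`: the coarsest topology refining both `t`
and the cocompact topology (generated by complements of `t`-compact saturated sets). -/
def patchOf {Z : Type*} (t : TopologicalSpace Z) : TopologicalSpace Z :=
  t ⊓ TopologicalSpace.generateFrom
    {V | ∃ K : Set Z, @IsCompact Z t K ∧ @SaturatedSet Z t K ∧ V = Kᶜ}
lemma mem_zcyl_iff (Y : (k : ℕ) → Set ((i : Fin k) → X i.1)) (k : ℕ)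
    (A : Set ((i : Fin k) → X i.1)) (p : PathSpace Y) :
    p ∈ Zcyl Y k A ↔ ∃ h : (k : ℕ∞) ≤ plen Y p, truncSeq Y k p h ∈ A := by
  cases p with
  | inl q =>
    constructor
    · rintro ⟨h, hm⟩
      exact ⟨by simpa [plen] using (Nat.cast_le (α := ℕ∞)).mpr h, hm⟩
    · rintro ⟨h, hm⟩
      exact ⟨by simpa [plen] using h, hm⟩
  | inr g =>
    constructor
    · intro hm; exact ⟨le_top, hm⟩
    · rintro ⟨h2, hm⟩; exact hm

lemma restrict_trunc (Y : (k : ℕ) → Set ((i : Fin k) → X i.1)) {k l : ℕ} (hkl : k ≤ l)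
    (p : PathSpace Y) (hl : (l : ℕ∞) ≤ plen Y p) :
    restrictSeq hkl (truncSeq Y l p hl) =
      truncSeq Y k p (le_trans (by exact_mod_cast hkl) hl) := by
  cases p <;> rfl

lemma trunc_mem_Y (Y : (k : ℕ) → Set ((i : Fin k) → X i.1))
    (hcompat : ∀ (k l : ℕ) (h : k ≤ l), ∀ f ∈ Y l, restrictSeq h f ∈ Y k)
    (k : ℕ) (p : PathSpace Y) (h : (k : ℕ∞) ≤ plen Y p) :
    truncSeq Y k p h ∈ Y k := by
  cases p with
  | inl q => exact hcompat k q.1 (by simpa [plen] using h) q.2.1 q.2.2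
  | inr g => exact g.2 k

lemma continuous_restrictSeq [∀ n, TopologicalSpace (X n)] {k l : ℕ} (h : k ≤ l) :
    Continuous (restrictSeq (X := X) h) :=
  continuous_pi fun _ => continuous_apply _

lemma zcyl_isOpen [∀ n, TopologicalSpace (X n)] (Y : (k : ℕ) → Set ((i : Fin k) → X i.1))
    {k : ℕ} {W : Set ((i : Fin k) → X i.1)} (hW : IsOpen W) :
    IsOpen[tauCyl Y] (Zcyl Y k W) :=
  TopologicalSpace.GenerateOpen.basic _ ⟨k, W, hW, rfl⟩

lemma zcyl_mono (Y : (k : ℕ) → Set ((i : Fin k) → X i.1)) {k : ℕ}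
    {A B : Set ((i : Fin k) → X i.1)} (h : A ⊆ B) : Zcyl Y k A ⊆ Zcyl Y k B := by
  intro p hp
  rw [mem_zcyl_iff] at hp ⊢
  exact ⟨hp.1, h hp.2⟩

lemma exists_basic [∀ n, TopologicalSpace (X n)] (Y : (k : ℕ) → Set ((i : Fin k) → X i.1))
    {U : Set (PathSpace Y)} (hU : IsOpen[tauCyl Y] U) :
    ∀ p ∈ U, ∃ (k : ℕ) (W : Set ((i : Fin k) → X i.1)),
      IsOpen W ∧ p ∈ Zcyl Y k W ∧ Zcyl Y k W ⊆ U := by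
  have hU' : TopologicalSpace.GenerateOpen
      {S | ∃ (k : ℕ) (V : Set ((i : Fin k) → X i.1)), IsOpen V ∧ S = Zcyl Y k V} U := hU
  clear hU
  induction hU' with
  | basic s hs =>
    obtain ⟨k, W, hW, rfl⟩ := hs
    exact fun p hp => ⟨k, W, hW, hp, subset_rfl⟩
  | univ =>
    intro p _
    refine ⟨0, univ, isOpen_univ, ?_, subset_univ _⟩
    rw [mem_zcyl_iff]
    exact ⟨zero_le, mem_univ _⟩
  | inter u v hu hv ihu ihv =>
    intro p hp
    obtain ⟨k, Wk, hWk, hpk, hsk⟩ := ihu p hp.1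
    obtain ⟨l, Wl, hWl, hpl, hsl⟩ := ihv p hp.2
    rw [mem_zcyl_iff] at hpk hpl
    obtain ⟨hk, hmk⟩ := hpk
    obtain ⟨hl, hml⟩ := hpl
    rcases le_total k l with h | h
    · refine ⟨l, Wl ∩ restrictSeq h ⁻¹' Wk,
        hWl.inter ((continuous_restrictSeq h).isOpen_preimage _ hWk), ?_, ?_⟩
      · rw [mem_zcyl_iff]
        refine ⟨hl, hml, ?_⟩
        rw [Set.mem_preimage, restrict_trunc]
        exact hmk
      · intro x hx
        rw [mem_zcyl_iff] at hx
        obtain ⟨hxl, hxm, hxr⟩ := hx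
        rw [Set.mem_preimage, restrict_trunc] at hxr
        constructor
        · exact hsk (by rw [mem_zcyl_iff]; exact ⟨le_trans (by exact_mod_cast h) hxl, hxr⟩)
        · exact hsl (by rw [mem_zcyl_iff]; exact ⟨hxl, hxm⟩)
    · refine ⟨k, Wk ∩ restrictSeq h ⁻¹' Wl,
        hWk.inter ((continuous_restrictSeq h).isOpen_preimage _ hWl), ?_, ?_⟩
      · rw [mem_zcyl_iff]
        refine ⟨hk, hmk, ?_⟩
        rw [Set.mem_preimage, restrict_trunc]
        exact hml
      · intro x hx
        rw [mem_zcyl_iff] at hx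
        obtain ⟨hxk, hxm, hxr⟩ := hx
        rw [Set.mem_preimage, restrict_trunc] at hxr
        constructor
        · exact hsk (by rw [mem_zcyl_iff]; exact ⟨hxk, hxm⟩)
        · exact hsl (by rw [mem_zcyl_iff]; exact ⟨le_trans (by exact_mod_cast h) hxk, hxr⟩)
  | sUnion S hS ih =>
    intro p hp
    obtain ⟨s, hsS, hps⟩ := hp
    obtain ⟨k, W, hW, hpk, hsub⟩ := ih s hsS p hps
    exact ⟨k, W, hW, hpk, hsub.trans (subset_sUnion_of_mem hsS)⟩

lemma key_point [∀ n, TopologicalSpace (X n)] (Y : (k : ℕ) → Set ((i : Fin k) → X i.1))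
    (hcompat : ∀ (k l : ℕ) (h : k ≤ l), ∀ f ∈ Y l, restrictSeq h f ∈ Y k)
    (hLC : ∀ k, LocallyCompactSpace {f : (i : Fin k) → X i.1 // f ∈ Y k})
    {U : Set (PathSpace Y)} (hU : IsOpen[tauCyl Y] U) (p : PathSpace Y) (hp : p ∈ U) :
    ∃ (k : ℕ) (W : Set ((i : Fin k) → X i.1)) (C : Set ((i : Fin k) → X i.1)),
      IsOpen W ∧ IsCompact C ∧ C ⊆ Y k ∧ p ∈ Zcyl Y k W ∧
      Zcyl Y k W ⊆ Zcyl Y k C ∧ Zcyl Y k C ⊆ U := by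
  obtain ⟨k, W0, hW0, hpW0, hW0U⟩ := exists_basic Y hU p hp
  rw [mem_zcyl_iff] at hpW0
  obtain ⟨hk, hf⟩ := hpW0
  set f := truncSeq Y k p hk with hfdef
  have hfY : f ∈ Y k := trunc_mem_Y Y hcompat k p hk
  haveI := hLC k
  set x : {f : (i : Fin k) → X i.1 // f ∈ Y k} := ⟨f, hfY⟩
  have hW0' : IsOpen (Subtype.val ⁻¹' W0 : Set {f : (i : Fin k) → X i.1 // f ∈ Y k}) :=
    (continuous_subtype_val).isOpen_preimage _ hW0
  obtain ⟨s, hs_nhds, hsW, hs_cpt⟩ :=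
    LocallyCompactSpace.local_compact_nhds x (Subtype.val ⁻¹' W0) (hW0'.mem_nhds hf)
  obtain ⟨O, hOs, hOopen, hxO⟩ := mem_nhds_iff.mp hs_nhds
  obtain ⟨W1, hW1, hW1O⟩ := isOpen_induced_iff.mp hOopen
  refine ⟨k, W0 ∩ W1, Subtype.val '' s, hW0.inter hW1,
    hs_cpt.image continuous_subtype_val, ?_, ?_, ?_, ?_⟩
  · rintro g ⟨⟨g', hg'⟩, -, rfl⟩
    exact hg'
  · rw [mem_zcyl_iff]
    refine ⟨hk, hf, ?_⟩
    have : x ∈ O := hxO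
    rw [← hW1O] at this
    exact this
  · intro q hq
    rw [mem_zcyl_iff] at hq ⊢
    obtain ⟨hql, hqm⟩ := hq
    refine ⟨hql, ?_⟩
    have hqY : truncSeq Y k q hql ∈ Y k := trunc_mem_Y Y hcompat k q hql
    have : (⟨truncSeq Y k q hql, hqY⟩ : {f // f ∈ Y k}) ∈ O := by
      rw [← hW1O]; exact hqm.2
    exact ⟨_, hOs this, rfl⟩
  · intro q hq
    apply hW0U
    rw [mem_zcyl_iff] at hq ⊢
    obtain ⟨hql, hqm⟩ := hq
    obtain ⟨y, hy, hyq⟩ := hqm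
    refine ⟨hql, ?_⟩
    have : (y : (i : Fin k) → X i.1) ∈ W0 := hsW hy
    rwa [hyq] at this

/-- a compact saturated set in `(Y, τ_cyl)` avoiding a point `w` is
covered by finitely many cylinders of compact sets avoiding `w`. -/
theorem stmt_9 [∀ n, TopologicalSpace (X n)] [∀ n, T1Space (X n)] [∀ n, QuasiSober (X n)]
    (Y : (k : ℕ) → Set ((i : Fin k) → X i.1))
    (hclosed : ∀ k, IsClosed (Y k))
    (hcompat : ∀ (k l : ℕ) (h : k ≤ l), ∀ f ∈ Y l, restrictSeq h f ∈ Y k)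
    (hLC : ∀ k, LocallyCompactSpace {f : (i : Fin k) → X i.1 // f ∈ Y k})
    (Kt : Set (PathSpace Y))
    (hKc : @IsCompact (PathSpace Y) (tauCyl Y) Kt)
    (hKs : @SaturatedSet (PathSpace Y) (tauCyl Y) Kt)
    (w : PathSpace Y) (hw : w ∉ Kt) :
    ∃ (n : ℕ) (l : Fin n → ℕ) (K : (i : Fin n) → Set ((j : Fin (l i)) → X j.1)),
      (∀ i, IsCompact (K i) ∧ K i ⊆ Y (l i)) ∧
      Kt ⊆ ⋃ i, Zcyl Y (l i) (K i) ∧ w ∉ ⋃ i, Zcyl Y (l i) (K i) := by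
  classical
  letI : TopologicalSpace (PathSpace Y) := tauCyl Y
  -- find an open set separating Kt from w
  have hexU : ∃ U : Set (PathSpace Y), IsOpen U ∧ Kt ⊆ U ∧ w ∉ U := by
    by_contra hcon
    push_neg at hcon
    apply hw
    rw [hKs]
    intro V hV
    exact hcon V hV.1 hV.2
  obtain ⟨U, hUo, hKU, hwU⟩ := hexU
  have key : ∀ p ∈ Kt, ∃ (k : ℕ) (W : Set ((i : Fin k) → X i.1)) (C : Set ((i : Fin k) → X i.1)),
      IsOpen W ∧ IsCompact C ∧ C ⊆ Y k ∧ p ∈ Zcyl Y k W ∧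
      Zcyl Y k W ⊆ Zcyl Y k C ∧ Zcyl Y k C ⊆ U :=
    fun p hp => key_point Y hcompat hLC hUo p (hKU hp)
  choose k W C hWo hCc hCY hpW hWC hCU using key
  have hcover : Kt ⊆ ⋃ p : Kt, Zcyl Y (k p.1 p.2) (W p.1 p.2) := by
    intro x hx
    exact mem_iUnion.mpr ⟨⟨x, hx⟩, hpW x hx⟩
  obtain ⟨t, ht⟩ := hKc.elim_finite_subcover (fun p : Kt => Zcyl Y (k p.1 p.2) (W p.1 p.2))
    (fun p => zcyl_isOpen Y (hWo p.1 p.2)) hcover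
  refine ⟨t.card, fun i => k (t.equivFin.symm i).1.1 (t.equivFin.symm i).1.2,
    fun i => C (t.equivFin.symm i).1.1 (t.equivFin.symm i).1.2, ?_, ?_, ?_⟩
  · intro i
    exact ⟨hCc _ _, hCY _ _⟩
  · intro x hx
    obtain ⟨p, hpt, hxp⟩ := mem_iUnion₂.mp (ht hx)
    obtain ⟨i, hi⟩ : ∃ i, t.equivFin.symm i = ⟨p, hpt⟩ :=
      ⟨t.equivFin ⟨p, hpt⟩, t.equivFin.symm_apply_apply _⟩
    refine mem_iUnion.mpr ⟨i, ?_⟩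
    beta_reduce
    rw [hi]
    exact hWC p.1 p.2 hxp
  · intro hwmem
    obtain ⟨i, hi⟩ := mem_iUnion.mp hwmem
    exact hwU (hCU _ _ hi)
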